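/- (Parabolic point-selection lemma.) Let R > 0, N > 0 and (x₀, t₀) ∈ ℝ³ × ℝ. Let S be a subset of the open parabolic cylinder C_{2R}(x₀, t₀) containing (x₀, t₀) whose intersection with the closed parabolic cylinder B̄_R(x₀) × [t₀ − R², t₀ + R²] is compact, and let A : S → [0, ∞) be a continuous function with A(x₀, t₀) ≥ 4N R^{-1}. Then there exist (q, s) ∈ S and γ > 0 with γ = A(q, s)^{-1}, such that C_{Nγ}(q, s) ⊆ C_{2R}(x₀, t₀) and sup { A(y, τ) : (y, τ) ∈ S ∩ C_{Nγ}(q, s) } ≤ 2γ^{-1} = 2 A(q, s). -/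

import Mathlib

open Metric Set

set_option maxHeartbeats 1000000

/-- The open parabolic cylinder `C_r(x,t) = B_r(x) × (t - r², t + r²)` in space-time
`ℝ³ × ℝ`. -/
def parabolicCyl (c : EuclideanSpace ℝ (Fin 3) × ℝ) (r : ℝ) :
    Set (EuclideanSpace ℝ (Fin 3) × ℝ) :=
  Metric.ball c.1 r ×ˢ Set.Ioo (c.2 - r ^ 2) (c.2 + r ^ 2)

/-- The closed parabolic cylinder `B̄_r(x) × [t - r², t + r²]` in space-time `ℝ³ × ℝ`. -/
def closedParabolicCyl (c : EuclideanSpace ℝ (Fin 3) × ℝ) (r : ℝ) :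
    Set (EuclideanSpace ℝ (Fin 3) × ℝ) :=
  Metric.closedBall c.1 r ×ˢ Set.Icc (c.2 - r ^ 2) (c.2 + r ^ 2)

/-- **Lemma 3.4 (parabolic point selection).** If `S ⊆ C_{2R}(x₀,t₀)` contains `(x₀,t₀)`,
meets the closed parabolic cylinder of radius `R` in a compact set, and `A : S → [0,∞)` is
continuous with `A(x₀,t₀) ≥ 4N/R`, then there are `(q,s) ∈ S` and `γ = A(q,s)⁻¹ > 0` with
`C_{Nγ}(q,s) ⊆ C_{2R}(x₀,t₀)` and `sup_{S ∩ C_{Nγ}(q,s)} A ≤ 2γ⁻¹ = 2A(q,s)`. -/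
theorem parabolic_point_selection (R N : ℝ) (hR : 0 < R) (hN : 0 < N)
    (x₀ : EuclideanSpace ℝ (Fin 3)) (t₀ : ℝ)
    (S : Set (EuclideanSpace ℝ (Fin 3) × ℝ))
    (hS : S ⊆ parabolicCyl (x₀, t₀) (2 * R))
    (hmem : (x₀, t₀) ∈ S)
    (hcpt : IsCompact (S ∩ closedParabolicCyl (x₀, t₀) R))
    (A : EuclideanSpace ℝ (Fin 3) × ℝ → ℝ)
    (hAcont : ContinuousOn A S)
    (hAnonneg : ∀ p ∈ S, 0 ≤ A p)
    (hA : 4 * N * R⁻¹ ≤ A (x₀, t₀)) :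
    ∃ q ∈ S, ∃ γ : ℝ, 0 < γ ∧ γ = (A q)⁻¹ ∧
      parabolicCyl q (N * γ) ⊆ parabolicCyl (x₀, t₀) (2 * R) ∧
      ∀ p ∈ S ∩ parabolicCyl q (N * γ), A p ≤ 2 * γ⁻¹ := by
  by_contra hcon
  push_neg at hcon
  set a : ℝ := A (x₀, t₀) with ha_def
  have ha : 0 < a := lt_of_lt_of_le (by positivity) hA
  -- the invariant for the iterative point selection
  set Good : (EuclideanSpace ℝ (Fin 3) × ℝ) → ℕ → Prop := fun p k =>
    p ∈ S ∧ 2 ^ k * a ≤ A p ∧ dist p.1 x₀ ≤ R / 2 * (1 - (1/2 : ℝ) ^ k) ∧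
      |p.2 - t₀| ≤ R ^ 2 / 12 * (1 - (1/4 : ℝ) ^ k) with hGood_def
  have key : ∀ k : ℕ, ∃ p, Good p k := by
    intro k
    induction k with
    | zero =>
      refine ⟨(x₀, t₀), hmem, by norm_num [ha_def], by simp, by simp⟩
    | succ k ih =>
      obtain ⟨p, hpS, hpA, hpd, hpt⟩ := ih
      have hpow2 : (0:ℝ) < (1/2 : ℝ) ^ k := by positivity
      have hpow2' : ((1/2 : ℝ) ^ k) * (2 ^ k) = 1 := by
        rw [← mul_pow]; norm_num
      have hpow2le : ((1/2 : ℝ) ^ k) ≤ 1 := pow_le_one₀ (by norm_num) (by norm_num)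
      have hpow4 : (0:ℝ) < (1/4 : ℝ) ^ k := by positivity
      have hpow4le : ((1/4 : ℝ) ^ k) ≤ 1 := pow_le_one₀ (by norm_num) (by norm_num)
      have hApos : 0 < A p := lt_of_lt_of_le (by positivity) hpA
      set γ : ℝ := (A p)⁻¹ with hγ_def
      have hγpos : 0 < γ := inv_pos.mpr hApos
      -- key bound on N * γ
      have haN : 4 * N * R⁻¹ ≤ a := hA
      have hNγ : N * γ ≤ R / 4 * (1/2 : ℝ) ^ k := by
        rw [hγ_def, mul_inv_le_iff₀ hApos]
        have h1 : R / 4 * (1/2 : ℝ) ^ k * (2 ^ k * a) = R / 4 * a := by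
          rw [show R / 4 * (1/2 : ℝ) ^ k * (2 ^ k * a)
              = R / 4 * ((1/2 : ℝ) ^ k * 2 ^ k) * a from by ring, hpow2', mul_one]
        have h2 : N ≤ R / 4 * a := by
          have := mul_le_mul_of_nonneg_left haN (le_of_lt (by positivity : (0:ℝ) < R / 4))
          calc N = R / 4 * (4 * N * R⁻¹) := by field_simp
            _ ≤ R / 4 * a := this
        have h3 : R / 4 * (1/2 : ℝ) ^ k * (2 ^ k * a) ≤ R / 4 * (1/2 : ℝ) ^ k * A p :=
          mul_le_mul_of_nonneg_left hpA (by positivity)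
        calc N ≤ R / 4 * a := h2
          _ = R / 4 * (1/2 : ℝ) ^ k * (2 ^ k * a) := h1.symm
          _ ≤ _ := h3
      have hNγpos : 0 < N * γ := by positivity
      have hNγR : N * γ ≤ R / 4 := le_trans hNγ (by nlinarith)
      -- inclusion of the small cylinder in the big one
      have hdR : dist p.1 x₀ ≤ R / 2 := le_trans hpd (by nlinarith)
      have htR : |p.2 - t₀| ≤ R ^ 2 / 12 := le_trans hpt (by nlinarith)
      have hsub : parabolicCyl p (N * γ) ⊆ parabolicCyl (x₀, t₀) (2 * R) := by
        rintro y ⟨hy1, hy2⟩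
        simp only [mem_ball] at hy1
        simp only [mem_Ioo] at hy2
        have hsq : (N * γ) ^ 2 ≤ R ^ 2 / 16 := by
          have := pow_le_pow_left₀ (le_of_lt hNγpos) hNγR 2
          calc (N * γ) ^ 2 ≤ (R / 4) ^ 2 := this
            _ = R ^ 2 / 16 := by ring
        have hR2 : (0:ℝ) < R ^ 2 := by positivity
        have h4R : ((2:ℝ) * R) ^ 2 = 4 * R ^ 2 := by ring
        constructor
        · simp only [mem_ball]
          calc dist y.1 x₀ ≤ dist y.1 p.1 + dist p.1 x₀ := dist_triangle _ _ _
            _ < N * γ + R / 2 := by linarith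
            _ ≤ R / 4 + R / 2 := by linarith
            _ < 2 * R := by linarith
        · simp only [mem_Ioo]
          have habs := abs_le.mp htR
          constructor
          · linarith [habs.1, hy2.1]
          · linarith [habs.2, hy2.2]
      -- apply the contradiction hypothesis
      obtain ⟨p', ⟨hp'S, hp'cyl⟩, hp'A⟩ := hcon p hpS γ hγpos rfl hsub
      rw [hγ_def, inv_inv] at hp'A
      obtain ⟨hc1, hc2⟩ := hp'cyl
      simp only [mem_ball] at hc1
      simp only [mem_Ioo] at hc2
      refine ⟨p', hp'S, ?_, ?_, ?_⟩
      · have : (2:ℝ) ^ (k+1) * a = 2 * (2 ^ k * a) := by ring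
        rw [this]
        nlinarith
      · have h2 : ((1/2 : ℝ)) ^ (k+1) = (1/2) * (1/2) ^ k := by ring
        rw [h2]
        calc dist p'.1 x₀ ≤ dist p'.1 p.1 + dist p.1 x₀ := dist_triangle _ _ _
          _ ≤ N * γ + R / 2 * (1 - (1/2 : ℝ) ^ k) := by linarith [le_of_lt hc1]
          _ ≤ R / 4 * (1/2 : ℝ) ^ k + R / 2 * (1 - (1/2 : ℝ) ^ k) := by linarith
          _ = R / 2 * (1 - 1/2 * (1/2 : ℝ) ^ k) := by ring
      · have hsq : (N * γ) ^ 2 ≤ R ^ 2 / 16 * (1/4 : ℝ) ^ k := by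
          have := pow_le_pow_left₀ (le_of_lt hNγpos) hNγ 2
          calc (N * γ) ^ 2 ≤ (R / 4 * (1/2 : ℝ) ^ k) ^ 2 := this
            _ = R ^ 2 / 16 * ((1/2 : ℝ) ^ k) ^ 2 := by ring
            _ = R ^ 2 / 16 * (1/4 : ℝ) ^ k := by
                congr 1
                rw [← pow_mul, mul_comm k 2, pow_mul]
                norm_num
        have habs := abs_le.mp hpt
        have h4 : ((1/4 : ℝ)) ^ (k+1) = (1/4) * (1/4) ^ k := by ring
        rw [h4, abs_le]
        constructor
        · linarith [hc2.1, habs.1]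
        · linarith [hc2.2, habs.2]
  choose f hf using key
  -- each f k lies in the compact set
  have hfK : ∀ k, f k ∈ S ∩ closedParabolicCyl (x₀, t₀) R := by
    intro k
    obtain ⟨h1, h2, h3, h4⟩ := hf k
    refine ⟨h1, ?_, ?_⟩
    · simp only [mem_closedBall]
      have : (1/2 : ℝ) ^ k ≥ 0 := by positivity
      have h5 : (0:ℝ) ≤ R * (1/2 : ℝ) ^ k := by positivity
      calc dist (f k).1 x₀ ≤ R / 2 * (1 - (1/2 : ℝ) ^ k) := h3
        _ ≤ R := by nlinarith
    · have h5 : (0:ℝ) ≤ R ^ 2 * (1/4 : ℝ) ^ k := by positivity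
      have hR2 : (0:ℝ) < R ^ 2 := by positivity
      have habs := abs_le.mp h4
      simp only [mem_Icc]
      constructor <;> nlinarith [habs.1, habs.2]
  -- A is bounded on the compact set
  have hKne : (S ∩ closedParabolicCyl (x₀, t₀) R).Nonempty := ⟨f 0, hfK 0⟩
  obtain ⟨z, hzK, hz⟩ := hcpt.exists_isMaxOn hKne (hAcont.mono inter_subset_left)
  rw [isMaxOn_iff] at hz
  -- contradiction: 2^k * a is unbounded
  obtain ⟨n, hn⟩ := pow_unbounded_of_one_lt (A z / a) (by norm_num : (1:ℝ) < 2)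
  have h1 : 2 ^ n * a ≤ A (f n) := (hf n).2.1
  have h2 : A (f n) ≤ A z := hz _ (hfK n)
  have h3 : A z < 2 ^ n * a := (div_lt_iff₀ ha).mp hn
  linarith
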